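/- Let K₀ be a smooth o-symmetric convex domain in ℝ². A separable point set S ⊆ ∂K₀ has cardinality 4 if and only if S = {p, −p, q, −q} where {p, q} is an Auerbach basis of the normed plane with unit ball K₀. -/

import Mathlib

open scoped Pointwise
open Topology

/-- The planar cross product of two vectors in `ℝ²`. -/
private def cr (u v : EuclideanSpace ℝ (Fin 2)) : ℝ := u 0 * v 1 - u 1 * v 0

private lemma cr_id (u v w : EuclideanSpace ℝ (Fin 2)) :
    cr u w • v = cr v w • u + cr u v • w := by
  ext i
  fin_cases i <;>
    simp only [cr, PiLp.add_apply, PiLp.smul_apply, smul_eq_mul, Fin.mk_zero, Fin.mk_one] <;> ring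

private lemma cr_map (f : EuclideanSpace ℝ (Fin 2) →L[ℝ] ℝ)
    (u v w : EuclideanSpace ℝ (Fin 2)) :
    cr u w * f v = cr v w * f u + cr u v * f w := by
  have h := congrArg f (cr_id u v w)
  simpa only [map_add, map_smul, smul_eq_mul] using h

private lemma cr_swap (u v : EuclideanSpace ℝ (Fin 2)) : cr u v = - cr v u := by
  simp only [cr]; ring

private lemma eq_smul_of_cr_eq_zero {x y : EuclideanSpace ℝ (Fin 2)} (hx : x ≠ 0)
    (h : cr x y = 0) : ∃ t : ℝ, y = t • x := by
  have h' : x 0 * y 1 - x 1 * y 0 = 0 := h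
  by_cases h0 : x 0 = 0
  · have h1 : x 1 ≠ 0 := by
      intro h1
      apply hx
      ext i; fin_cases i <;> simp [h0, h1]
    refine ⟨y 1 / x 1, ?_⟩
    ext i
    fin_cases i <;> simp only [PiLp.smul_apply, smul_eq_mul, Fin.mk_zero, Fin.mk_one]
    · rw [h0, mul_zero]
      have : x 1 * y 0 = 0 := by rw [h0] at h'; linarith
      rcases mul_eq_zero.mp this with h2 | h2
      · exact absurd h2 h1
      · exact h2
    · field_simp
  · refine ⟨y 0 / x 0, ?_⟩
    ext i
    fin_cases i <;> simp only [PiLp.smul_apply, smul_eq_mul, Fin.mk_zero, Fin.mk_one]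
    · field_simp
    · field_simp
      nlinarith [h']

set_option maxHeartbeats 2000000 in
/-- For a smooth o-symmetric convex domain `K` in `ℝ²` (smoothness encoded by the
supporting-functional map `F`), a separable point set `S ⊆ ∂K` has cardinality `4` iff
`S = {p, -p, q, -q}` where `{p, q}` is an Auerbach basis of the normed plane whose unit
ball is `K` (gauge norm), i.e. `p, q` are linearly independent unit vectors each Birkhoff
orthogonal to the other. -/
theorem separable_point_set_card_four_iff_auerbach
    (K : Set (EuclideanSpace ℝ (Fin 2)))
    (hconv : Convex ℝ K) (hcomp : IsCompact K) (hint : (interior K).Nonempty)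
    (hsymm : K = -K)
    (F : EuclideanSpace ℝ (Fin 2) → (EuclideanSpace ℝ (Fin 2) →L[ℝ] ℝ))
    (hFnorm : ∀ p ∈ frontier K, ‖F p‖ = 1)
    (hFsupp : ∀ p ∈ frontier K, ∀ x ∈ K, F p x ≤ F p p)
    (hsmooth : ∀ p ∈ frontier K, ∀ g : EuclideanSpace ℝ (Fin 2) →L[ℝ] ℝ,
      ‖g‖ = 1 → (∀ x ∈ K, g x ≤ g p) → g = F p)
    (S : Set (EuclideanSpace ℝ (Fin 2))) (hS : S ⊆ frontier K)
    (hsep : ∀ x ∈ S, ∀ y ∈ S, x ≠ y →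
      ¬ (x ∈ frontier K ∧ 0 < F y x ∧ F y x ≤ F y y)) :
    S.ncard = 4 ↔
      ∃ p q : EuclideanSpace ℝ (Fin 2), S = {p, -p, q, -q} ∧
        gauge K p = 1 ∧ gauge K q = 1 ∧ LinearIndependent ℝ ![p, q] ∧
        (∀ t : ℝ, gauge K p ≤ gauge K (p + t • q)) ∧
        (∀ t : ℝ, gauge K q ≤ gauge K (q + t • p)) := by
  have hclosed : IsClosed K := hcomp.isClosed
  have hKfr : frontier K ⊆ K := hclosed.frontier_subset
  have hnegK : ∀ x ∈ K, -x ∈ K := by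
    intro x hx
    rw [hsymm, Set.mem_neg, neg_neg]
    exact hx
  -- negation preserves interior
  have hnegint : ∀ x ∈ interior K, -x ∈ interior K := by
    intro x hx
    rw [mem_interior_iff_mem_nhds] at hx ⊢
    have h2 : (fun y : EuclideanSpace ℝ (Fin 2) => -y) ⁻¹' K ∈ 𝓝 (-x) :=
      continuous_neg.continuousAt.preimage_mem_nhds (by rwa [neg_neg])
    have h3 : (fun y : EuclideanSpace ℝ (Fin 2) => -y) ⁻¹' K = K := by
      ext y
      simp only [Set.mem_preimage]
      constructor
      · intro h; have := hnegK _ h; rwa [neg_neg] at this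
      · exact hnegK y
    rwa [h3] at h2
  -- 0 is an interior point
  obtain ⟨z, hz⟩ := hint
  have h0int : (0 : EuclideanSpace ℝ (Fin 2)) ∈ interior K := by
    have h1 := hnegint z hz
    have h2 := hconv.interior hz h1 (by norm_num : (0:ℝ) ≤ 1/2)
      (by norm_num : (0:ℝ) ≤ 1/2) (by norm_num)
    have h3 : (1/2 : ℝ) • z + (1/2 : ℝ) • (-z) = 0 := by
      rw [smul_neg]; exact add_neg_cancel _
    rwa [h3] at h2
  have hK0 : K ∈ 𝓝 (0 : EuclideanSpace ℝ (Fin 2)) := mem_interior_iff_mem_nhds.mp h0int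
  have hg1 : ∀ x ∈ frontier K, gauge K x = 1 := fun x hx =>
    (gauge_eq_one_iff_mem_frontier hconv hK0).mpr hx
  have hne0 : ∀ x ∈ frontier K, x ≠ 0 := by
    intro x hx h
    have := hg1 x hx
    rw [h, gauge_zero] at this
    norm_num at this
  -- positivity of F x x on the frontier
  have hpos : ∀ x ∈ frontier K, 0 < F x x := by
    intro x hx
    have hFne : F x ≠ 0 := by
      intro h
      have := hFnorm x hx
      rw [h] at this
      simp at this
    obtain ⟨v, hv⟩ : ∃ v, F x v ≠ 0 := by
      by_contra h
      push_neg at h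
      exact hFne (ContinuousLinearMap.ext fun v => by simp [h v])
    obtain ⟨ε, hε, hball⟩ := Metric.mem_nhds_iff.mp hK0
    obtain ⟨w, hfw⟩ : ∃ w, 0 < F x w := by
      rcases lt_or_gt_of_ne hv with h | h
      · exact ⟨-v, by rw [map_neg]; linarith⟩
      · exact ⟨v, h⟩
    have hwne : w ≠ 0 := by
      intro h; rw [h, map_zero] at hfw; exact lt_irrefl _ hfw
    have hnw : (0:ℝ) < ‖w‖ := norm_pos_iff.mpr hwne
    have hun : (ε / (2 * ‖w‖)) • w ∈ Metric.ball (0 : EuclideanSpace ℝ (Fin 2)) ε := by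
      rw [Metric.mem_ball, dist_zero_right, norm_smul, Real.norm_eq_abs,
        abs_of_pos (by positivity)]
      have h5 : ε / (2 * ‖w‖) * ‖w‖ = ε / 2 := by field_simp
      rw [h5]; linarith
    have huK : (ε / (2 * ‖w‖)) • w ∈ K := hball hun
    have h1 : 0 < F x ((ε / (2 * ‖w‖)) • w) := by
      rw [map_smul, smul_eq_mul]
      exact mul_pos (by positivity) hfw
    exact lt_of_lt_of_le h1 (hFsupp x hx _ huK)
  -- frontier is symmetric
  have hfrneg : ∀ x ∈ frontier K, -x ∈ frontier K := by
    intro x hx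
    rw [hclosed.frontier_eq, Set.mem_diff] at hx ⊢
    refine ⟨hnegK x hx.1, fun h => hx.2 ?_⟩
    have := hnegint _ h
    rwa [neg_neg] at this
  -- the supporting functional at -x is -(F x)
  have hFneg : ∀ x ∈ frontier K, F (-x) = -(F x) := by
    intro x hx
    refine (hsmooth (-x) (hfrneg x hx) (-(F x)) (by rw [norm_neg]; exact hFnorm x hx) ?_).symm
    intro y hy
    have h1 := hFsupp x hx (-y) (hnegK y hy)
    simp only [ContinuousLinearMap.neg_apply, map_neg, neg_neg] at h1 ⊢
    linarith
  -- separability reformulated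
  have hneg : ∀ x ∈ S, ∀ y ∈ S, x ≠ y → F y x ≤ 0 := by
    intro x hx y hy hxy
    by_contra h
    push_neg at h
    exact hsep x hx y hy hxy ⟨hS hx, h, hFsupp y (hS hy) x (hKfr (hS hx))⟩
  -- key gauge inequality
  have hkey : ∀ x ∈ frontier K, ∀ z', F x z' ≤ gauge K z' * F x x := by
    intro x hx z'
    have hpx := hpos x hx
    have hgeq : gauge K z' = sInf {r : ℝ | 0 < r ∧ z' ∈ r • K} := rfl
    have hne : {r : ℝ | 0 < r ∧ z' ∈ r • K}.Nonempty :=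
      (absorbent_nhds_zero hK0).gauge_set_nonempty
    have hlb : ∀ b ∈ {r : ℝ | 0 < r ∧ z' ∈ r • K}, F x z' / F x x ≤ b := by
      rintro b ⟨hb, w, hw, rfl⟩
      rw [div_le_iff₀ hpx, map_smul, smul_eq_mul]
      exact mul_le_mul_of_nonneg_left (hFsupp x hx w hw) hb.le
    have h2 : F x z' / F x x ≤ sInf {r : ℝ | 0 < r ∧ z' ∈ r • K} := le_csInf hne hlb
    calc F x z' = F x z' / F x x * F x x := by field_simp
      _ ≤ sInf {r : ℝ | 0 < r ∧ z' ∈ r • K} * F x x :=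
          mul_le_mul_of_nonneg_right h2 hpx.le
      _ = gauge K z' * F x x := by rw [hgeq]
  -- Birkhoff orthogonality from vanishing functional
  have hbirk : ∀ x y : EuclideanSpace ℝ (Fin 2), x ∈ frontier K → F x y = 0 →
      ∀ t : ℝ, gauge K x ≤ gauge K (x + t • y) := by
    intro x y hx hxy t
    have h1 : F x (x + t • y) = F x x := by
      rw [map_add, map_smul, smul_eq_mul, hxy]; ring
    have h2 := hkey x hx (x + t • y)
    rw [h1] at h2
    have hp := hpos x hx
    have h3 : (1:ℝ) ≤ gauge K (x + t • y) := by nlinarith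
    rw [hg1 x hx]; exact h3
  constructor
  · intro hcard
    have hSfin : S.Finite := Set.finite_of_ncard_ne_zero (by omega)
    -- a pair with zero cross product consists of antipodes
    have hOpp : ∀ x ∈ S, ∀ y ∈ S, x ≠ y → cr x y = 0 → y = -x := by
      intro x hx y hy hxy hcr
      obtain ⟨t, rfl⟩ := eq_smul_of_cr_eq_zero (hne0 x (hS hx)) hcr
      have hfx := hpos x (hS hx)
      have ht0 : t ≠ 0 := by
        rintro rfl
        rw [zero_smul] at hy
        exact hne0 0 (hS hy) rfl
      have htneg : t < 0 := by
        rcases lt_or_gt_of_ne ht0 with h | h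
        · exact h
        · exfalso
          have h1 := hneg (t • x) hy x hx (Ne.symm hxy)
          rw [map_smul, smul_eq_mul] at h1
          nlinarith
      have hgx : gauge K (t • x) = 1 := hg1 _ (hS hy)
      have h2 : t • x = (-t) • (-x) := by rw [neg_smul, smul_neg, neg_neg]
      rw [h2, gauge_smul_of_nonneg (by linarith : (0:ℝ) ≤ -t),
        gauge_neg hnegK, smul_eq_mul, hg1 x (hS hx), mul_one] at hgx
      have : t = -1 := by linarith
      rw [this, neg_one_smul]
    -- extract four distinct points
    obtain ⟨a, ha⟩ := Set.nonempty_of_ncard_ne_zero (s := S) (by omega)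
    have h3card : (S \ {a}).ncard = 3 := by
      rw [Set.ncard_diff_singleton_of_mem ha, hcard]
    obtain ⟨b, c, d, hbc, hbd, hcd, hrest⟩ := Set.ncard_eq_three.mp h3card
    have hb : b ∈ S := by
      have : b ∈ S \ {a} := by rw [hrest]; exact Set.mem_insert _ _
      exact this.1
    have hc : c ∈ S := by
      have : c ∈ S \ {a} := by rw [hrest]; simp
      exact this.1
    have hd : d ∈ S := by
      have : d ∈ S \ {a} := by rw [hrest]; simp
      exact this.1
    have hab : a ≠ b := by
      intro h; have : b ∈ S \ {a} := by rw [hrest]; exact Set.mem_insert _ _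
      exact this.2 (by rw [h]; exact Set.mem_singleton _)
    have hac : a ≠ c := by
      intro h; have : c ∈ S \ {a} := by rw [hrest]; simp
      exact this.2 (by rw [h]; exact Set.mem_singleton _)
    have had : a ≠ d := by
      intro h; have : d ∈ S \ {a} := by rw [hrest]; simp
      exact this.2 (by rw [h]; exact Set.mem_singleton _)
    -- existence of an antipodal pair
    have hexOpp : ∃ x ∈ S, ∃ y ∈ S, x ≠ y ∧ y = -x := by
      by_contra hno
      push_neg at hno
      have hcr : ∀ x ∈ S, ∀ y ∈ S, x ≠ y → cr x y ≠ 0 := by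
        intro x hx y hy hxy h
        exact hno x hx y hy hxy (hOpp x hx y hy hxy h)
      -- non-cyclic triple with the middle point's functional
      have H2 : ∀ u ∈ S, ∀ v ∈ S, ∀ w ∈ S, u ≠ v → v ≠ w →
          0 < cr u v → 0 < cr v w → 0 < cr u w → False := by
        intro u hu v hv w hw huv hvw h1 h2 h3
        have hid := cr_map (F v) u v w
        have hp := hpos v (hS hv)
        have hu' := hneg u hu v hv huv
        have hw' := hneg w hw v hv (Ne.symm hvw)
        nlinarith [mul_pos h3 hp, mul_nonneg h2.le (neg_nonneg.mpr hu'),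
          mul_nonneg h1.le (neg_nonneg.mpr hw')]
      -- cyclic triple: all three lie on the supporting line of a
      have H3 : ∀ x ∈ S, ∀ y ∈ S, ∀ z' ∈ S, x ≠ a → y ≠ a → z' ≠ a → x ≠ y →
          0 < cr x y → 0 < cr y z' → 0 < cr z' x → False := by
        intro x hx y hy z' hz' hxa hya hza hxy h1 h2 h3
        have hfx := hneg x hx a ha hxa
        have hfy := hneg y hy a ha hya
        have hfz := hneg z' hz' a ha hza
        have hid := cr_map (F a) x y z'
        have hxz : cr x z' < 0 := by
          have := cr_swap x z'; linarith
        have e1 : cr y z' * F a x ≤ 0 := mul_nonpos_of_nonneg_of_nonpos h2.le hfx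
        have e2 : cr x y * F a z' ≤ 0 := mul_nonpos_of_nonneg_of_nonpos h1.le hfz
        have e3 : 0 ≤ cr x z' * F a y := by nlinarith
        have h5 : cr y z' * F a x = 0 := by linarith
        have h6 : cr x y * F a z' = 0 := by linarith
        have hfx0 : F a x = 0 := (mul_eq_zero.mp h5).resolve_left h2.ne'
        have hfz0 : F a z' = 0 := (mul_eq_zero.mp h6).resolve_left h1.ne'
        have h7 : cr x z' * F a y = 0 := by linarith
        have hfy0 : F a y = 0 := (mul_eq_zero.mp h7).resolve_left hxz.ne
        have hid2 := cr_map (F a) x a y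
        rw [hfx0, hfy0] at hid2
        have h8 : cr x y * F a a = 0 := by linarith
        have h9 : F a a = 0 := (mul_eq_zero.mp h8).resolve_left h1.ne'
        exact absurd h9 (hpos a (hS ha)).ne'
      have hbc' := hcr b hb c hc hbc
      have hcd' := hcr c hc d hd hcd
      have hdb' := hcr d hd b hb (Ne.symm hbd)
      have hba : b ≠ a := Ne.symm hab
      have hca : c ≠ a := Ne.symm hac
      have hda : d ≠ a := Ne.symm had
      rcases lt_or_gt_of_ne hbc' with s1 | s1 <;>
        rcases lt_or_gt_of_ne hcd' with s2 | s2 <;>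
          rcases lt_or_gt_of_ne hdb' with s3 | s3
      -- (−,−,−) cyclic
      · refine H3 b hb d hd c hc hba hda hca hbd ?_ ?_ ?_
        · rw [cr_swap]; linarith
        · rw [cr_swap]; linarith
        · rw [cr_swap]; linarith
      -- (−,−,+): H2 d c b
      · refine H2 d hd c hc b hb (Ne.symm hcd) (Ne.symm hbc) ?_ ?_ s3
        · rw [cr_swap]; linarith
        · rw [cr_swap]; linarith
      -- (−,+,−): H2 c b d
      · refine H2 c hc b hb d hd (Ne.symm hbc) hbd ?_ ?_ s2
        · rw [cr_swap]; linarith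
        · rw [cr_swap]; linarith
      -- (−,+,+): H2 c d b
      · refine H2 c hc d hd b hb hcd (Ne.symm hbd) s2 s3 ?_
        rw [cr_swap]; linarith
      -- (+,−,−): H2 b d c
      · refine H2 b hb d hd c hc hbd (Ne.symm hcd) ?_ ?_ s1
        · rw [cr_swap]; linarith
        · rw [cr_swap]; linarith
      -- (+,−,+): H2 d b c
      · refine H2 d hd b hb c hc (Ne.symm hbd) hbc s3 s1 ?_
        rw [cr_swap]; linarith
      -- (+,+,−): H2 b c d
      · refine H2 b hb c hc d hd hbc hcd s1 s2 ?_
        rw [cr_swap]; linarith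
      -- (+,+,+) cyclic
      · exact H3 b hb c hc d hd hba hca hda hbc s1 s2 s3
    obtain ⟨p, hp, p', hp', hpp', hpeq⟩ := hexOpp
    subst hpeq
    -- the two remaining points
    have hsub : ({p, -p} : Set (EuclideanSpace ℝ (Fin 2))) ⊆ S := by
      intro x hx
      rcases hx with h | h
      · rw [h]; exact hp
      · rw [Set.mem_singleton_iff.mp h]; exact hp'
    have hT : (S \ {p, -p}).ncard = 2 := by
      rw [Set.ncard_diff hsub (Set.toFinite _), hcard, Set.ncard_pair hpp']
    obtain ⟨u, v, huv, hTe⟩ := Set.ncard_eq_two.mp hT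
    have huT : u ∈ S \ {p, -p} := by rw [hTe]; exact Set.mem_insert _ _
    have hvT : v ∈ S \ {p, -p} := by rw [hTe]; simp
    have hu : u ∈ S := huT.1
    have hv : v ∈ S := hvT.1
    have hup : u ≠ p := fun h => huT.2 (by rw [h]; exact Set.mem_insert _ _)
    have hunp : u ≠ -p := fun h => huT.2 (by rw [h]; simp)
    have hvp : v ≠ p := fun h => hvT.2 (by rw [h]; exact Set.mem_insert _ _)
    have hvnp : v ≠ -p := fun h => hvT.2 (by rw [h]; simp)
    have hpfr : p ∈ frontier K := hS hp
    -- F p vanishes on u and v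
    have hFpu : F p u = 0 := by
      have h1 := hneg u hu p hp hup
      have h2 := hneg u hu (-p) hp' hunp
      rw [hFneg p hpfr] at h2
      simp only [ContinuousLinearMap.neg_apply] at h2
      linarith
    have hFpv : F p v = 0 := by
      have h1 := hneg v hv p hp hvp
      have h2 := hneg v hv (-p) hp' hvnp
      rw [hFneg p hpfr] at h2
      simp only [ContinuousLinearMap.neg_apply] at h2
      linarith
    -- hence u and v are antipodal
    have hcruv : cr u v = 0 := by
      have hid := cr_map (F p) u p v
      rw [hFpu, hFpv] at hid
      have h8 : cr u v * F p p = 0 := by linarith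
      exact (mul_eq_zero.mp h8).resolve_right (hpos p hpfr).ne'
    have hveq : v = -u := hOpp u hu v hv huv hcruv
    subst hveq
    have hqfr : u ∈ frontier K := hS hu
    -- F u vanishes on p
    have hFup : F u p = 0 := by
      have h1 := hneg p hp u hu (Ne.symm hup)
      have hpnu : p ≠ -u := by
        intro h
        apply hunp
        rw [h, neg_neg]
      have h2 := hneg p hp (-u) hv hpnu
      rw [hFneg u hqfr] at h2
      simp only [ContinuousLinearMap.neg_apply] at h2
      linarith
    -- the set S is {p, -p, u, -u}
    have hSeq : S = ({p, -p, u, -u} : Set (EuclideanSpace ℝ (Fin 2))) := by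
      have h1 := Set.union_diff_cancel hsub
      rw [← h1, hTe]
      ext x
      simp only [Set.mem_union, Set.mem_insert_iff, Set.mem_singleton_iff]
      tauto
    -- linear independence
    have hlin : LinearIndependent ℝ ![p, u] := by
      rw [linearIndependent_fin2]
      constructor
      · simpa using hne0 u hqfr
      · intro t ht
        simp only [Matrix.cons_val_one, Matrix.head_cons, Matrix.cons_val_zero] at ht
        have h1 : F u p = t * F u u := by rw [← ht, map_smul, smul_eq_mul]
        have h2 := hpos u hqfr
        have ht0 : t ≠ 0 := by
          rintro rfl
          rw [zero_smul] at ht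
          exact hne0 p hpfr ht.symm
        rw [hFup] at h1
        exact ht0 (by
          rcases mul_eq_zero.mp h1.symm with h | h
          · exact h
          · exact absurd h h2.ne')
    exact ⟨p, u, hSeq, hg1 p hpfr, hg1 u hqfr, hlin,
      hbirk p u hpfr hFpu, hbirk u p hqfr hFup⟩
  · rintro ⟨p, q, rfl, hgp, hgq, hlin, -, -⟩
    obtain ⟨hq0, hPQ⟩ := linearIndependent_fin2.mp hlin
    simp only [Matrix.cons_val_one, Matrix.head_cons, Matrix.cons_val_zero] at hq0 hPQ
    have hp0 : p ≠ 0 := fun h => hPQ 0 (by rw [zero_smul, h])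
    have hpq : p ≠ q := fun h => hPQ 1 (by rw [one_smul, h])
    have hpnq : p ≠ -q := fun h => hPQ (-1) (by rw [neg_one_smul, ← h])
    have hqnq : q ≠ -q := by
      intro h
      apply hq0
      have : q + q = 0 := by nth_rewrite 1 [h]; exact neg_add_cancel q
      have h2 : (2:ℝ) • q = 0 := by rw [two_smul]; exact this
      simpa using (smul_eq_zero.mp h2).resolve_left (by norm_num)
    have hpnp : p ≠ -p := by
      intro h
      apply hp0
      have : p + p = 0 := by nth_rewrite 1 [h]; exact neg_add_cancel p
      have h2 : (2:ℝ) • p = 0 := by rw [two_smul]; exact this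
      simpa using (smul_eq_zero.mp h2).resolve_left (by norm_num)
    have hnpq : -p ≠ q := fun h => hpnq (by rw [← h, neg_neg])
    have hnpnq : -p ≠ -q := fun h => hpq (neg_injective h)
    rw [Set.ncard_insert_of_notMem (by
        simp only [Set.mem_insert_iff, Set.mem_singleton_iff]
        push_neg
        exact ⟨hpnp, hpq, hpnq⟩) (Set.toFinite _),
      Set.ncard_insert_of_notMem (by
        simp only [Set.mem_insert_iff, Set.mem_singleton_iff]
        push_neg
        exact ⟨hnpq, hnpnq⟩) (Set.toFinite _),
      Set.ncard_pair hqnq]
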